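/- Let N ≥ 4 be even, 0 < ε ≤ 1/N, σ > 0, β > 0, and x_i = -(σε/β)·ln(1 - 2(1-ε)·i/N). Then for all 0 ≤ i ≤ N/2 - 2 and all μ with 0 ≤ μ ≤ σ, the inequality (x_{i+1} - x_i)^μ · exp(-β x_i / ε) ≤ C · ε^μ · N^{-μ} holds for some constant C depending only on σ, β, μ. -/

import Mathlib

theorem weighted_mesh_step_bound (σ β μ : ℝ) (hσ : 0 < σ) (hβ : 0 < β)
    (hμ0 : 0 ≤ μ) (hμσ : μ ≤ σ) :
    ∃ C > (0:ℝ), ∀ N : ℕ, 4 ≤ N → Even N → ∀ ε : ℝ, 0 < ε → ε ≤ 1 / N →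
      ∀ i : ℕ, i ≤ N / 2 - 2 →
        ((-(σ * ε / β) * Real.log (1 - 2 * (1 - ε) * (i + 1) / N)) -
            (-(σ * ε / β) * Real.log (1 - 2 * (1 - ε) * i / N))) ^ μ *
          Real.exp (-β * (-(σ * ε / β) * Real.log (1 - 2 * (1 - ε) * i / N)) / ε) ≤
            C * ε ^ μ * (N : ℝ) ^ (-μ) := by
  refine ⟨(4 * σ / β) ^ μ, Real.rpow_pos_of_pos (by positivity) μ, ?_⟩
  intro N hN4 hNeven ε hε hεN i hi
  have hN0 : (0:ℝ) < N := by
    have : (4:ℝ) ≤ N := by exact_mod_cast hN4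
    linarith
  have hε1 : ε ≤ 1 := by
    have h1 : (1:ℝ) / N ≤ 1 := by
      rw [div_le_one hN0]
      have : (4:ℝ) ≤ N := by exact_mod_cast hN4
      linarith
    linarith
  -- key nat inequality: 2*(i+1) + 2 ≤ N
  have hiN : (2 * (i + 1) + 2 : ℕ) ≤ N := by
    obtain ⟨k, hk⟩ := hNeven
    omega
  have hiNR : (2:ℝ) * (i + 1) + 2 ≤ N := by exact_mod_cast hiN
  set A : ℝ := 1 - 2 * (1 - ε) * i / N with hAdef
  set B : ℝ := 1 - 2 * (1 - ε) * (i + 1) / N with hBdef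
  clear_value A B
  have hεnn : 0 ≤ 1 - ε := by linarith
  have hBlb : ε + 2 * (1 - ε) / N ≤ B := by
    have h : 2 * (1 - ε) * ((i:ℝ) + 1) / N + 2 * (1 - ε) / N ≤ 1 - ε := by
      rw [← add_div, div_le_iff₀ hN0]
      have h3 := mul_le_mul_of_nonneg_left hiNR hεnn
      linarith [h3]
    rw [hBdef]
    linarith
  have hB0 : 0 < B := by
    have : (0:ℝ) ≤ 2 * (1 - ε) / N := by positivity
    linarith
  have hAB : A = B + 2 * (1 - ε) / N := by rw [hAdef, hBdef]; ring
  have hA0 : 0 < A := by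
    have : (0:ℝ) ≤ 2 * (1 - ε) / N := by positivity
    linarith
  have hA1 : A ≤ 1 := by
    rw [hAdef]
    have : (0:ℝ) ≤ 2 * (1 - ε) * i / N := by positivity
    linarith
  have hA2B : A ≤ 2 * B := by
    have h1 : 2 * (1 - ε) / N ≤ B := by
      have : (0:ℝ) < ε := hε
      linarith
    linarith [hAB]
  have hBA : B ≤ A := by
    have : (0:ℝ) ≤ 2 * (1 - ε) / N := by positivity
    linarith [hAB]
  -- the step
  have hstep : (-(σ * ε / β) * Real.log B) - (-(σ * ε / β) * Real.log A)
      = (σ * ε / β) * (Real.log A - Real.log B) := by ring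
  have hlog : Real.log A - Real.log B ≤ 2 * (1 - ε) / (N * B) := by
    rw [← Real.log_div hA0.ne' hB0.ne']
    have h1 : Real.log (A / B) ≤ A / B - 1 :=
      Real.log_le_sub_one_of_pos (by positivity)
    have h2 : A / B - 1 = 2 * (1 - ε) / (N * B) := by
      rw [hAB]
      field_simp
      ring
    linarith
  have hstepnn : 0 ≤ (σ * ε / β) * (Real.log A - Real.log B) := by
    have h1 := Real.log_le_log hB0 hBA
    exact mul_nonneg (by positivity) (by linarith)
  -- exponential term
  have hexp : Real.exp (-β * (-(σ * ε / β) * Real.log A) / ε) = A ^ σ := by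
    have harg : -β * (-(σ * ε / β) * Real.log A) / ε = Real.log A * σ := by
      field_simp
    rw [harg, Real.rpow_def_of_pos hA0]
  rw [hstep, hexp]
  have hAσμ : A ^ σ ≤ A ^ μ := Real.rpow_le_rpow_of_exponent_ge hA0 hA1 hμσ
  have hstep2 : ((σ * ε / β) * (Real.log A - Real.log B)) ^ μ
      ≤ ((σ * ε / β) * (2 * (1 - ε) / (N * B))) ^ μ := by
    apply Real.rpow_le_rpow hstepnn _ hμ0
    have h0 : 0 ≤ σ * ε / β := by positivity
    exact mul_le_mul_of_nonneg_left hlog h0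
  have hAμ0 : 0 ≤ A ^ μ := (Real.rpow_pos_of_pos hA0 μ).le
  calc ((σ * ε / β) * (Real.log A - Real.log B)) ^ μ * A ^ σ
      ≤ ((σ * ε / β) * (2 * (1 - ε) / (N * B))) ^ μ * A ^ μ := by
        apply mul_le_mul hstep2 hAσμ (Real.rpow_pos_of_pos hA0 σ).le
        positivity
    _ = ((σ * ε / β) * (2 * (1 - ε) / (N * B)) * A) ^ μ := by
        rw [← Real.mul_rpow (by positivity) hA0.le]
    _ ≤ ((4 * σ / β) * ε * (N:ℝ)⁻¹) ^ μ := by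
        apply Real.rpow_le_rpow (by positivity) _ hμ0
        have hL : (σ * ε / β) * (2 * (1 - ε) / (↑N * B)) * A
            = (σ * ε * (2 * (1 - ε)) * A) / (β * (↑N * B)) := by
          field_simp
          try ring
        have hR : 4 * σ / β * ε * (↑N:ℝ)⁻¹ = (4 * σ * ε * B) / (β * (↑N * B)) := by
          field_simp
          try ring
        rw [hL, hR]
        apply (div_le_div_iff_of_pos_right (by positivity)).mpr
        linarith [mul_nonneg (by positivity : (0:ℝ) ≤ σ * ε) (by linarith : (0:ℝ) ≤ 2 * B - A),
          mul_nonneg (by positivity : (0:ℝ) ≤ σ * ε) (mul_nonneg hε.le hA0.le)]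
    _ = (4 * σ / β) ^ μ * ε ^ μ * (N:ℝ) ^ (-μ) := by
        rw [Real.mul_rpow (by positivity) (by positivity),
          Real.mul_rpow (by positivity) hε.le,
          Real.inv_rpow hN0.le, ← Real.rpow_neg hN0.le]
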